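/- Newman's lower bound: for all N ≥ 4 and any rational function of Newman's form (indeed for the specific r above), the error satisfies ‖|x| − r(x)‖_{∞,[−1,1]} ≥ (1/2) e^{−9√N}. -/

import Mathlib

open Finset

set_option maxHeartbeats 1600000 in
/-- Newman's lower bound: ‖|x| - r(x)‖_{∞,[-1,1]} ≥ (1/2) e^{-9√N} for N ≥ 4. -/
theorem newman_lower_bound (N : ℕ) (hN : 4 ≤ N) :
    ∃ x ∈ Set.Icc (-1 : ℝ) 1,
      (1 / 2) * Real.exp (-9 * Real.sqrt N) ≤
      |(|x| - x * ((∏ k ∈ Finset.range N, (x + Real.exp (-(1 / Real.sqrt N)) ^ k)) -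
            (∏ k ∈ Finset.range N, (-x + Real.exp (-(1 / Real.sqrt N)) ^ k))) /
          ((∏ k ∈ Finset.range N, (x + Real.exp (-(1 / Real.sqrt N)) ^ k)) +
            (∏ k ∈ Finset.range N, (-x + Real.exp (-(1 / Real.sqrt N)) ^ k))))| := by
  have hN4 : (4:ℝ) ≤ (N:ℝ) := by exact_mod_cast hN
  set s : ℝ := Real.sqrt N with hs
  have hs2 : (2:ℝ) ≤ s := by
    have h4 : Real.sqrt 4 ≤ s := Real.sqrt_le_sqrt hN4
    have he : Real.sqrt 4 = 2 := by
      rw [show (4:ℝ) = 2^2 by norm_num, Real.sqrt_sq (by norm_num : (0:ℝ) ≤ 2)]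
    linarith
  have hs0 : (0:ℝ) < s := by linarith
  have hss : s * s = (N:ℝ) := Real.mul_self_sqrt (by linarith)
  set ξ : ℝ := Real.exp (-(1/s)) with hξ
  have hξ0 : (0:ℝ) < ξ := Real.exp_pos _
  have hξ1 : ξ < 1 := by
    rw [hξ, Real.exp_lt_one_iff]
    have : (0:ℝ) < 1/s := by positivity
    linarith
  -- ξ^m = exp(-(m/s))
  have hpow : ∀ m : ℕ, ξ ^ m = Real.exp (-((m:ℝ)/s)) := by
    intro m
    rw [hξ, ← Real.exp_nat_mul]
    congr 1; ring
  -- lower bound for 1 - ξ^m when m ≤ s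
  have hlb : ∀ m : ℕ, (m:ℝ) ≤ s → (m:ℝ)/(2*s) ≤ 1 - ξ ^ m := by
    intro m hm
    set u : ℝ := (m:ℝ)/s with hu
    have hu0 : 0 ≤ u := by positivity
    have hu1 : u ≤ 1 := by rw [hu, div_le_one hs0]; exact hm
    have h1 : ξ ^ m ≤ 1/(u+1) := by
      rw [hpow m, Real.exp_neg]
      rw [one_div]
      exact inv_anti₀ (by linarith) (by linarith [Real.add_one_le_exp u])
    have hinv : (u+1) * (1/(u+1)) = 1 := by field_simp
    have hgoal : u/2 ≤ 1 - ξ ^ m := by nlinarith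
    have : (m:ℝ)/(2*s) = u/2 := by rw [hu]; ring
    linarith
  -- upper bound ξ^m ≤ 1/2 when s ≤ m
  have hub : ∀ m : ℕ, s ≤ (m:ℝ) → ξ ^ m ≤ 1/2 := by
    intro m hm
    have h1 : ξ ^ m ≤ Real.exp (-1) := by
      rw [hpow m, Real.exp_le_exp]
      have : (1:ℝ) ≤ (m:ℝ)/s := by rw [le_div_iff₀ hs0]; linarith
      linarith
    have h2 : Real.exp (-1) ≤ 1/2 := by
      rw [Real.exp_neg]
      rw [inv_le_comm₀ (Real.exp_pos 1) (by norm_num)]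
      have := Real.add_one_le_exp (1:ℝ)
      linarith
    linarith
  -- The witness x = ξ^N
  have hxpos : (0:ℝ) < ξ ^ N := by positivity
  have hxlt1 : ξ ^ N < 1 := pow_lt_one₀ hξ0.le hξ1 (by omega)
  have hxval : ξ ^ N = Real.exp (-s) := by
    rw [hpow N]
    congr 1
    rw [neg_inj, div_eq_iff hs0.ne', ← hss]
  refine ⟨ξ ^ N, ⟨by linarith, hxlt1.le⟩, ?_⟩
  -- name the products
  set P : ℝ := ∏ k ∈ Finset.range N, (ξ ^ N + ξ ^ k) with hP
  set Q : ℝ := ∏ k ∈ Finset.range N, (-(ξ ^ N) + ξ ^ k) with hQ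
  set A : ℝ := ∏ j ∈ Finset.range N, (1 + ξ ^ (j+1)) with hA
  set B : ℝ := ∏ j ∈ Finset.range N, (1 - ξ ^ (j+1)) with hB
  set C : ℝ := ∏ k ∈ Finset.range N, ξ ^ k with hC
  have hC0 : 0 < C := by rw [hC]; exact prod_pos (fun k _ => by positivity)
  have hfac : ∀ k ∈ Finset.range N, ξ ^ N = ξ ^ k * ξ ^ (N - k) := by
    intro k hk
    rw [← pow_add]
    congr 1
    have := mem_range.mp hk; omega
  have hreflp : ∏ k ∈ Finset.range N, (1 + ξ ^ (N - k)) = A := by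
    rw [hA, ← prod_range_reflect (fun j => 1 + ξ ^ (j+1)) N]
    apply prod_congr rfl
    intro k hk
    have hkN := mem_range.mp hk
    congr 2
    omega
  have hreflm : ∏ k ∈ Finset.range N, (1 - ξ ^ (N - k)) = B := by
    rw [hB, ← prod_range_reflect (fun j => 1 - ξ ^ (j+1)) N]
    apply prod_congr rfl
    intro k hk
    have hkN := mem_range.mp hk
    congr 2
    omega
  have hPA : P = C * A := by
    rw [hP, ← hreflp, hC, ← prod_mul_distrib]
    apply prod_congr rfl
    intro k hk
    rw [hfac k hk]; ring
  have hQB : Q = C * B := by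
    rw [hQ, ← hreflm, hC, ← prod_mul_distrib]
    apply prod_congr rfl
    intro k hk
    rw [hfac k hk]; ring
  have hBfac : ∀ j : ℕ, 0 < 1 - ξ ^ (j+1) := by
    intro j
    have : ξ ^ (j+1) < 1 := pow_lt_one₀ hξ0.le hξ1 (by omega)
    linarith
  have hB0 : 0 < B := by rw [hB]; exact prod_pos (fun j _ => hBfac j)
  have hA0 : 0 < A := by
    rw [hA]; exact prod_pos (fun j _ => by positivity)
  have hBA : B ≤ A := by
    rw [hA, hB]
    apply prod_le_prod (fun j _ => (hBfac j).le)
    intro j _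
    have : (0:ℝ) ≤ ξ ^ (j+1) := by positivity
    linarith
  -- ratio product
  set ρ : ℕ → ℝ := fun j => (1 + ξ ^ (j+1)) / (1 - ξ ^ (j+1)) with hρ
  have hρ0 : ∀ j, 0 ≤ ρ j := by
    intro j
    apply div_nonneg _ (hBfac j).le
    positivity
  have hAρB : A = (∏ j ∈ Finset.range N, ρ j) * B := by
    rw [hA, hB, ← prod_mul_distrib]
    apply prod_congr rfl
    intro j _
    rw [hρ]
    exact (div_mul_cancel₀ _ (hBfac j).ne').symm
  -- split at M = Nat.sqrt N
  set M : ℕ := Nat.sqrt N with hM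
  have hMN : M ≤ N := Nat.sqrt_le_self N
  have hMr : (M:ℝ) ≤ s := by
    rw [hs, Real.le_sqrt (by positivity) (by linarith)]
    exact_mod_cast Nat.sqrt_le' N
  have hsM : s < (M:ℝ) + 1 := by
    rw [hs]
    have h1 : Real.sqrt N < ((M:ℝ)+1) := by
      rw [Real.sqrt_lt' (by positivity)]
      exact_mod_cast Nat.lt_succ_sqrt' N
    exact h1
  -- small part bound
  have hR1 : ∏ j ∈ Finset.range M, ρ j ≤ Real.exp (4*s) := by
    have step : ∀ j ∈ Finset.range M, ρ j ≤ (4*s)/((j:ℝ)+1) := by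
      intro j hj
      have hjM : j < M := mem_range.mp hj
      have hj1 : ((j:ℝ)+1) ≤ s := by
        have : ((j:ℝ)+1) ≤ (M:ℝ) := by exact_mod_cast Nat.succ_le_of_lt hjM
        linarith
      have hlow : ((j:ℝ)+1)/(2*s) ≤ 1 - ξ ^ (j+1) := by
        have := hlb (j+1) (by push_cast; linarith)
        push_cast at this
        linarith
      have hnum : 1 + ξ ^ (j+1) ≤ 2 := by
        have : ξ ^ (j+1) < 1 := pow_lt_one₀ hξ0.le hξ1 (by omega)
        linarith
      have hd0 : (0:ℝ) < ((j:ℝ)+1)/(2*s) := by positivity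
      have h1 : ρ j ≤ 2 / (((j:ℝ)+1)/(2*s)) := by
        rw [hρ]
        exact div_le_div₀ (by norm_num) hnum hd0 hlow
      have h2 : 2 / (((j:ℝ)+1)/(2*s)) = (4*s)/((j:ℝ)+1) := by
        field_simp; ring
      linarith
    calc ∏ j ∈ Finset.range M, ρ j
        ≤ ∏ j ∈ Finset.range M, (4*s)/((j:ℝ)+1) :=
          prod_le_prod (fun j _ => hρ0 j) step
      _ = (4*s)^M / (M.factorial : ℝ) := by
          have hfact : ∏ j ∈ Finset.range M, ((j:ℝ)+1) = (M.factorial : ℝ) := by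
            rw [← Finset.prod_range_add_one_eq_factorial]
            push_cast
            rfl
          rw [prod_div_distrib, prod_const, card_range, hfact]
      _ ≤ Real.exp (4*s) := Real.pow_div_factorial_le_exp (4*s) (by positivity) M
  -- tail part bound
  have hR2 : ∏ j ∈ Finset.range (N - M), ρ (M + j) ≤ Real.exp (4*s) := by
    have step : ∀ j ∈ Finset.range (N - M), ρ (M + j) ≤ Real.exp (4 * ξ ^ (M+j+1)) := by
      intro j _
      set t : ℝ := ξ ^ (M+j+1) with ht
      have ht0 : 0 ≤ t := by positivity
      have hts : t ≤ 1/2 := by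
        apply hub
        push_cast
        linarith
      have hd : 0 < 1 - t := by linarith
      have h1 : ρ (M+j) ≤ 1 + 4*t := by
        rw [hρ]
        show (1 + ξ ^ (M+j+1)) / (1 - ξ ^ (M+j+1)) ≤ 1 + 4*t
        rw [← ht, div_le_iff₀ hd]
        nlinarith
      have h2 : 1 + 4*t ≤ Real.exp (4*t) := by
        have := Real.add_one_le_exp (4*t)
        linarith
      linarith
    calc ∏ j ∈ Finset.range (N-M), ρ (M + j)
        ≤ ∏ j ∈ Finset.range (N-M), Real.exp (4 * ξ ^ (M+j+1)) :=
          prod_le_prod (fun j _ => hρ0 _) step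
      _ = Real.exp (∑ j ∈ Finset.range (N-M), 4 * ξ ^ (M+j+1)) := by
          rw [Real.exp_sum]
      _ ≤ Real.exp (4*s) := by
          rw [Real.exp_le_exp]
          have hsum : ∑ j ∈ Finset.range (N-M), 4 * ξ ^ (M+j+1)
              = 4 * ξ ^ (M+1) * ∑ j ∈ Finset.range (N-M), ξ ^ j := by
            rw [mul_sum]
            apply sum_congr rfl
            intro j _
            rw [show M+j+1 = (M+1)+j by ring, pow_add]
            ring
          have hgeom : ∑ j ∈ Finset.range (N-M), ξ ^ j ≤ 1/(1-ξ) := by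
            have h1 : (1-ξ) * ∑ j ∈ Finset.range (N-M), ξ ^ j = 1 - ξ^(N-M) := by
              linear_combination -(geom_sum_mul ξ (N-M))
            have h2 : (0:ℝ) < 1 - ξ := by linarith
            rw [le_div_iff₀ h2]
            nlinarith [pow_nonneg hξ0.le (N-M)]
          have hgub : 1/(1-ξ) ≤ 2*s := by
            have h1 : (1:ℝ)/(2*s) ≤ 1 - ξ := by
              have := hlb 1 (by push_cast; linarith)
              push_cast at this
              simpa using this
            have h2 : (0:ℝ) < 2*s := by linarith
            rw [div_le_iff₀ (by linarith [hBfac 0] : (0:ℝ) < 1 - ξ)]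
            rw [div_le_iff₀ h2] at h1
            nlinarith [h1]
          have hξM : ξ ^ (M+1) ≤ 1/2 := by
            apply hub
            push_cast
            linarith
          have hsumnn : (0:ℝ) ≤ ∑ j ∈ Finset.range (N-M), ξ ^ j :=
            sum_nonneg (fun j _ => by positivity)
          calc ∑ j ∈ Finset.range (N-M), 4 * ξ ^ (M+j+1)
              = 4 * ξ ^ (M+1) * ∑ j ∈ Finset.range (N-M), ξ ^ j := hsum
            _ ≤ 4*s := by
                have h3 : ∑ j ∈ Finset.range (N-M), ξ ^ j ≤ 2*s := le_trans hgeom hgub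
                nlinarith [pow_nonneg hξ0.le (M+1)]
  -- total ratio bound
  have hRtot : (∏ j ∈ Finset.range N, ρ j) ≤ Real.exp (8*s) := by
    have hsplit : (∏ j ∈ Finset.range N, ρ j)
        = (∏ j ∈ Finset.range M, ρ j) * ∏ j ∈ Finset.range (N-M), ρ (M+j) := by
      calc ∏ j ∈ Finset.range N, ρ j
          = ∏ j ∈ Finset.range (M + (N-M)), ρ j := by rw [Nat.add_sub_cancel' hMN]
        _ = (∏ j ∈ Finset.range M, ρ j) * ∏ j ∈ Finset.range (N-M), ρ (M+j) :=
            Finset.prod_range_add ρ M (N-M)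
    rw [hsplit]
    calc (∏ j ∈ Finset.range M, ρ j) * ∏ j ∈ Finset.range (N-M), ρ (M+j)
        ≤ Real.exp (4*s) * Real.exp (4*s) :=
          mul_le_mul hR1 hR2 (prod_nonneg fun j _ => hρ0 _) (Real.exp_pos _).le
      _ = Real.exp (8*s) := by rw [← Real.exp_add]; ring_nf
  have hAeB : A ≤ Real.exp (8*s) * B := by
    rw [hAρB]
    exact mul_le_mul_of_nonneg_right hRtot hB0.le
  have hexpBA : Real.exp (-(8*s)) ≤ B / A := by
    rw [le_div_iff₀ hA0]
    calc Real.exp (-(8*s)) * A ≤ Real.exp (-(8*s)) * (Real.exp (8*s) * B) :=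
          mul_le_mul_of_nonneg_left hAeB (Real.exp_pos _).le
      _ = B := by rw [← mul_assoc, ← Real.exp_add]; norm_num
  have hP0 : 0 < P := by rw [hPA]; positivity
  have hQ0 : 0 < Q := by rw [hQB]; positivity
  have hPQ : (0:ℝ) < P + Q := by linarith
  have habs : |ξ ^ N| = ξ ^ N := abs_of_pos hxpos
  have hEeq : |ξ ^ N| - ξ ^ N * (P - Q) / (P + Q) = 2 * ξ ^ N * Q / (P + Q) := by
    rw [habs]
    field_simp
    ring
  have hval : 2 * ξ ^ N * Q / (P + Q) = 2 * ξ ^ N * B / (A + B) := by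
    rw [hPA, hQB, show C * A + C * B = C * (A + B) by ring,
      show 2 * ξ ^ N * (C * B) = C * (2 * ξ ^ N * B) by ring,
      mul_div_mul_left _ _ hC0.ne']
  calc (1/2) * Real.exp (-9 * s) ≤ Real.exp (-9 * s) := by
        nlinarith [Real.exp_pos (-9 * s)]
    _ = ξ ^ N * Real.exp (-(8*s)) := by
        rw [hxval, ← Real.exp_add]; congr 1; ring
    _ ≤ ξ ^ N * (B / A) := mul_le_mul_of_nonneg_left hexpBA hxpos.le
    _ = 2 * ξ ^ N * B / (2 * A) := by
        field_simp
    _ ≤ 2 * ξ ^ N * B / (A + B) := by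
        apply div_le_div_of_nonneg_left (by positivity) (by linarith) (by linarith)
    _ = 2 * ξ ^ N * Q / (P + Q) := hval.symm
    _ = |ξ ^ N| - ξ ^ N * (P - Q) / (P + Q) := hEeq.symm
    _ ≤ |(|ξ ^ N| - ξ ^ N * (P - Q) / (P + Q))| := le_abs_self _
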